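/- Let V be a real vector space with a quaternionic triple (I,J,K), and let W ⊆ V be a subspace with I(W) ⊆ W such that V is the internal direct sum of W and J(W). Let g₀ be an inner product on W satisfying g₀(Ix, Iy) = g₀(x,y) for all x,y ∈ W. Then there exists a unique inner product g on V such that: g restricts to g₀ on W; g(w, Jw') = 0 for all w, w' ∈ W; and g is hyperhermitian, i.e. g(Lx, Ly) = g(x,y) for all x,y ∈ V and each L ∈ {I,J,K}. -/

import Mathlib

/-- Let `(I,J,K)` be a quaternionic triple on `V` and `W ⊆ V` an `I`-invariant
subspace with `V = W ⊕ J(W)`. Any `I`-invariant inner product `g₀` on `W` extends uniquely to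
a hyperhermitian inner product `g` on `V` with `g(W, J(W)) = 0`. -/
theorem unique_hyperhermitian_extension
    (V : Type*) [AddCommGroup V] [Module ℝ V]
    (I J K : V →ₗ[ℝ] V)
    (hI : I ∘ₗ I = -LinearMap.id) (hJ : J ∘ₗ J = -LinearMap.id)
    (hK : K ∘ₗ K = -LinearMap.id) (hIJ : I ∘ₗ J = K) (hJI : J ∘ₗ I = -K)
    (W : Submodule ℝ V) (hIW : ∀ x ∈ W, I x ∈ W)
    (hcompl : IsCompl W (Submodule.map J W))
    (g₀ : W →ₗ[ℝ] W →ₗ[ℝ] ℝ)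
    (hg₀symm : ∀ x y : W, g₀ x y = g₀ y x)
    (hg₀pos : ∀ x : W, x ≠ 0 → 0 < g₀ x x)
    (hg₀I : ∀ x y : W, g₀ (I.restrict hIW x) (I.restrict hIW y) = g₀ x y) :
    ∃! g : V →ₗ[ℝ] V →ₗ[ℝ] ℝ,
      (∀ x y : V, g x y = g y x) ∧
      (∀ x : V, x ≠ 0 → 0 < g x x) ∧
      (∀ x y : W, g x y = g₀ x y) ∧
      (∀ x y : W, g x (J y) = 0) ∧
      (∀ x y : V, g (I x) (I y) = g x y) ∧
      (∀ x y : V, g (J x) (J y) = g x y) ∧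
      (∀ x y : V, g (K x) (K y) = g x y) := by
  have hII : ∀ v : V, I (I v) = -v := fun v => by
    simpa using LinearMap.congr_fun hI v
  have hJJ : ∀ v : V, J (J v) = -v := fun v => by
    simpa using LinearMap.congr_fun hJ v
  have hIJ' : ∀ v : V, I (J v) = K v := fun v => LinearMap.congr_fun hIJ v
  have hJI' : ∀ v : V, J (I v) = -K v := fun v => by
    simpa using LinearMap.congr_fun hJI v
  have hAnti : ∀ v : V, I (J v) = -J (I v) := fun v => by rw [hIJ', hJI', neg_neg]
  have hJinj : Function.Injective J := by
    intro a b hab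
    have h := congrArg J hab
    rwa [hJJ, hJJ, neg_inj] at h
  set JW := Submodule.map J W with hJWdef
  set P := W.linearProjOfIsCompl JW hcompl with hPdef
  set Q := JW.linearProjOfIsCompl W hcompl.symm with hQdef
  set e := Submodule.equivMapOfInjective J hJinj W with hedef
  set π := (e.symm : JW →ₗ[ℝ] W) ∘ₗ Q with hπdef
  have hQcoe : ∀ v : V, J ((π v : W) : V) = (Q v : V) := fun v =>
    Submodule.map_equivMapOfInjective_symm_apply J hJinj W (Q v)
  have hdecomp : ∀ v : V, ((P v : V)) + J ((π v : W) : V) = v := fun v => by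
    rw [hQcoe]
    exact Submodule.projection_add_projection_eq_self hcompl v
  have hJmem : ∀ w : W, J (w : V) ∈ JW := fun w => Submodule.mem_map_of_mem w.2
  have hPW : ∀ w : W, P (w : V) = w := fun w =>
    Submodule.linearProjOfIsCompl_apply_left hcompl w
  have hPJW : ∀ x : V, x ∈ JW → P x = 0 := fun x hx =>
    Submodule.projectionOnto_apply_of_mem_right hcompl hx
  have hQW : ∀ w : W, Q (w : V) = 0 := fun w =>
    Submodule.projectionOnto_apply_of_mem_right hcompl.symm w.2
  have hπW : ∀ w : W, π (w : V) = 0 := fun w => by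
    simp [hπdef, hQW w]
  have hQJ : ∀ w : W, (Q (J (w : V)) : V) = J (w : V) := fun w =>
    congrArg Subtype.val
      (Submodule.linearProjOfIsCompl_apply_left hcompl.symm ⟨J (w : V), hJmem w⟩)
  have hπJ : ∀ w : W, π (J (w : V)) = w := fun w => by
    apply Subtype.val_injective
    apply hJinj
    calc J ((π (J (w : V)) : W) : V) = (Q (J (w : V)) : V) := hQcoe _
      _ = J (w : V) := hQJ w
  have hPJ : ∀ w : W, P (J (w : V)) = 0 := fun w => hPJW _ (hJmem w)
  -- action of I on the decomposition
  have hIdec : ∀ v : V,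
      I v = ((I.restrict hIW (P v) : W) : V) + J (((-(I.restrict hIW (π v)) : W)) : V) := by
    intro v
    conv_lhs => rw [← hdecomp v, map_add, hAnti]
    simp [LinearMap.restrict_apply]
  have hPI : ∀ v : V, P (I v) = I.restrict hIW (P v) := by
    intro v
    rw [hIdec v, map_add, hPW, hPJ, add_zero]
  have hπI : ∀ v : V, π (I v) = -(I.restrict hIW (π v)) := by
    intro v
    rw [hIdec v, map_add, hπW, hπJ, zero_add]
  -- action of J on the decomposition
  have hJdec : ∀ v : V, J v = ((-(π v) : W) : V) + J ((P v : W) : V) := by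
    intro v
    conv_lhs => rw [← hdecomp v, map_add, hJJ]
    push_cast
    abel
  have hPJv : ∀ v : V, P (J v) = -(π v) := by
    intro v
    rw [hJdec v, map_add, hPW, hPJ, add_zero]
  have hπJv : ∀ v : V, π (J v) = P v := by
    intro v
    rw [hJdec v, map_add, hπW, hπJ, zero_add]
  -- the candidate metric
  set g : V →ₗ[ℝ] V →ₗ[ℝ] ℝ := g₀.compl₁₂ P P + g₀.compl₁₂ π π with hgdef
  have hgapp : ∀ x y : V, g x y = g₀ (P x) (P y) + g₀ (π x) (π y) := fun x y => by
    simp [hgdef, LinearMap.compl₁₂_apply]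
  have hg₀nn : ∀ x : W, 0 ≤ g₀ x x := by
    intro x
    rcases eq_or_ne x 0 with rfl | h
    · simp
    · exact (hg₀pos x h).le
  have hgsymm : ∀ x y : V, g x y = g y x := by
    intro x y
    rw [hgapp, hgapp, hg₀symm (P x) (P y), hg₀symm (π x) (π y)]
  have hgpos : ∀ x : V, x ≠ 0 → 0 < g x x := by
    intro x hx
    rw [hgapp]
    by_cases hP : P x = 0
    · have hπx : π x ≠ 0 := by
        intro h0
        apply hx
        rw [← hdecomp x, hP, h0]
        simp
      have := hg₀pos (π x) hπx
      have h2 := hg₀nn (P x)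
      linarith
    · have := hg₀pos (P x) hP
      have h2 := hg₀nn (π x)
      linarith
  have hgW : ∀ x y : W, g x y = g₀ x y := by
    intro x y
    rw [hgapp, hPW, hPW, hπW, hπW]
    simp
  have hgWJ : ∀ x y : W, g x (J y) = 0 := by
    intro x y
    rw [hgapp, hPJ, hπW, hπJ]
    simp
  have hgI : ∀ x y : V, g (I x) (I y) = g x y := by
    intro x y
    rw [hgapp, hgapp, hPI, hPI, hπI, hπI]
    simp only [map_neg, LinearMap.neg_apply, neg_neg]
    rw [hg₀I, hg₀I]
  have hgJ : ∀ x y : V, g (J x) (J y) = g x y := by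
    intro x y
    rw [hgapp, hgapp, hPJv, hPJv, hπJv, hπJv]
    simp only [map_neg, LinearMap.neg_apply, neg_neg]
    exact add_comm _ _
  have hgK : ∀ x y : V, g (K x) (K y) = g x y := by
    intro x y
    rw [← hIJ', ← hIJ', hgI, hgJ]
  refine ⟨g, ⟨hgsymm, hgpos, hgW, hgWJ, hgI, hgJ, hgK⟩, ?_⟩
  rintro g' ⟨hs, _, hW0, hWJ0, _, hJinv, _⟩
  apply LinearMap.ext; intro x; apply LinearMap.ext; intro y
  have hx := hdecomp x
  have hy := hdecomp y
  calc g' x y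
      = g' (((P x : V)) + J ((π x : W) : V)) (((P y : V)) + J ((π y : W) : V)) := by
        rw [hx, hy]
    _ = g' (P x) (P y) + g' (P x) (J ((π y : W) : V)) + (g' (J ((π x : W) : V)) (P y)
          + g' (J ((π x : W) : V)) (J ((π y : W) : V))) := by
        simp only [map_add, LinearMap.add_apply]
        ring
    _ = g₀ (P x) (P y) + 0 + (0 + g₀ (π x) (π y)) := by
        rw [hW0, hWJ0, hJinv, hW0, hs (J ((π x : W) : V)) ((P y : W) : V), hWJ0]
    _ = g x y := by rw [hgapp]; ring
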